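/- For every integer m ≥ 2 and every real x ∈ [m·e, (m+1)·e) with (x/m)^m < (x/(m+1))^{m+1}, one has e^{x/e} − (x/m)^m ≤ (1/m)·(x/m)^m. -/

import Mathlib

theorem stmt10 (m : ℕ) (hm : 2 ≤ m) (x : ℝ)
    (h0 : (m : ℝ) * Real.exp 1 ≤ x) (h1 : x < ((m : ℝ) + 1) * Real.exp 1)
    (hcase : (x / (m : ℝ)) ^ (m : ℝ) < (x / ((m : ℝ) + 1)) ^ ((m : ℝ) + 1)) :
    Real.exp (x / Real.exp 1) - (x / (m : ℝ)) ^ (m : ℝ)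
      ≤ (1 / (m : ℝ)) * (x / (m : ℝ)) ^ (m : ℝ) := by
  have hm2 : (2:ℝ) ≤ (m:ℝ) := by exact_mod_cast hm
  have hM : (0:ℝ) < (m:ℝ) := by linarith
  have hM1 : (0:ℝ) < (m:ℝ) + 1 := by linarith
  have hE : (0:ℝ) < Real.exp 1 := Real.exp_pos 1
  have hx : 0 < x := lt_of_lt_of_le (by positivity) h0
  have hxm : 0 < x / (m:ℝ) := div_pos hx hM
  set u : ℝ := x / (((m:ℝ) + 1) * Real.exp 1) with hu_def
  have hup : 0 < u := div_pos hx (by positivity)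
  have hu1 : u < 1 := (div_lt_one (by positivity)).mpr h1
  have hu0 : (m:ℝ) / ((m:ℝ) + 1) ≤ u := by
    rw [hu_def, div_le_div_iff₀ hM1 (by positivity)]
    nlinarith
  have hL : 1 - u⁻¹ ≤ Real.log u := by
    have := Real.log_le_sub_one_of_pos (inv_pos.mpr hup)
    rw [Real.log_inv] at this
    linarith
  have huinv : u⁻¹ ≤ ((m:ℝ) + 1) / (m:ℝ) := by
    rw [inv_le_iff_one_le_mul₀ hup] at *
    calc (1:ℝ) = (((m:ℝ)+1)/(m:ℝ)) * ((m:ℝ)/((m:ℝ)+1)) := by field_simp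
      _ ≤ (((m:ℝ)+1)/(m:ℝ)) * u := by
          apply mul_le_mul_of_nonneg_left hu0 (by positivity)
  have hinv2 : (m:ℝ) * u⁻¹ ≤ (m:ℝ) + 1 := by
    have h9 : (m:ℝ) ≤ u * ((m:ℝ)+1) := by
      rw [div_le_iff₀ hM1] at hu0; linarith [hu0]
    calc (m:ℝ) * u⁻¹ ≤ (u * ((m:ℝ)+1)) * u⁻¹ :=
          mul_le_mul_of_nonneg_right h9 (le_of_lt (inv_pos.mpr hup))
      _ = ((m:ℝ)+1) * (u * u⁻¹) := by ring
      _ = (m:ℝ)+1 := by rw [mul_inv_cancel₀ (ne_of_gt hup), mul_one]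
  have l1 : ((m:ℝ)+1) * u ≤ ((m:ℝ)+1) + (m:ℝ) * Real.log u := by
    have h6 : (1 - u) * ((m:ℝ) * u⁻¹) ≤ (1 - u) * ((m:ℝ)+1) :=
      mul_le_mul_of_nonneg_left hinv2 (by linarith)
    have h8 : (m:ℝ)*(u*u⁻¹) = (m:ℝ) := by
      rw [mul_inv_cancel₀ (ne_of_gt hup), mul_one]
    have hA : (m:ℝ)*(1-u⁻¹) ≤ (m:ℝ)*Real.log u :=
      mul_le_mul_of_nonneg_left hL (le_of_lt hM)
    nlinarith [h6, h8, hA]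
  have l2 : 1 / ((m:ℝ)+1) ≤ Real.log (((m:ℝ)+1) / (m:ℝ)) := by
    have he : Real.exp (1/((m:ℝ)+1)) ≤ ((m:ℝ)+1)/(m:ℝ) := by
      have h3 : -(1/((m:ℝ)+1)) + 1 ≤ Real.exp (-(1/((m:ℝ)+1))) :=
        Real.add_one_le_exp _
      rw [Real.exp_neg] at h3
      have hep : 0 < Real.exp (1/((m:ℝ)+1)) := Real.exp_pos _
      have h4 : Real.exp (1/((m:ℝ)+1)) * (-(1/((m:ℝ)+1)) + 1) ≤ 1 := by
        calc Real.exp (1/((m:ℝ)+1)) * (-(1/((m:ℝ)+1)) + 1)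
            ≤ Real.exp (1/((m:ℝ)+1)) * (Real.exp (1/((m:ℝ)+1)))⁻¹ :=
              mul_le_mul_of_nonneg_left h3 (le_of_lt hep)
          _ = 1 := mul_inv_cancel₀ (ne_of_gt hep)
      have h5 := mul_le_mul_of_nonneg_right h4 (le_of_lt hM1)
      have h6 : (-(1/((m:ℝ)+1)) + 1) * ((m:ℝ)+1) = (m:ℝ) := by field_simp; ring
      rw [le_div_iff₀ hM]
      calc Real.exp (1/((m:ℝ)+1)) * (m:ℝ)
          = Real.exp (1/((m:ℝ)+1)) * ((-(1/((m:ℝ)+1)) + 1) * ((m:ℝ)+1)) := by rw [h6]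
        _ = Real.exp (1/((m:ℝ)+1)) * (-(1/((m:ℝ)+1)) + 1) * ((m:ℝ)+1) := by ring
        _ ≤ 1 * ((m:ℝ)+1) := h5
        _ = (m:ℝ)+1 := one_mul _
    calc 1/((m:ℝ)+1) = Real.log (Real.exp (1/((m:ℝ)+1))) := (Real.log_exp _).symm
      _ ≤ Real.log (((m:ℝ)+1)/(m:ℝ)) :=
          Real.log_le_log (Real.exp_pos _) he
  have hlogxm : Real.log (x / (m:ℝ)) =
      Real.log u + Real.log (((m:ℝ)+1)/(m:ℝ)) + 1 := by
    have : x / (m:ℝ) = u * ((((m:ℝ)+1)/(m:ℝ)) * Real.exp 1) := by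
      rw [hu_def]; field_simp
    rw [this, Real.log_mul (ne_of_gt hup) (by positivity),
      Real.log_mul (by positivity) (ne_of_gt hE), Real.log_exp]
    ring
  have hxE : x / Real.exp 1 = u * ((m:ℝ)+1) := by
    rw [hu_def]; field_simp
  have hlog1m : Real.log (1 + 1/(m:ℝ)) = Real.log (((m:ℝ)+1)/(m:ℝ)) := by
    congr 1; field_simp
  have key : x / Real.exp 1 ≤
      Real.log (1 + 1/(m:ℝ)) + (m:ℝ) * Real.log (x / (m:ℝ)) := by
    rw [hxE, hlog1m, hlogxm]
    have h8 : 1 ≤ ((m:ℝ)+1) * Real.log (((m:ℝ)+1)/(m:ℝ)) := by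
      have := mul_le_mul_of_nonneg_left l2 (le_of_lt hM1)
      have he : ((m:ℝ)+1) * (1/((m:ℝ)+1)) = 1 := by field_simp
      linarith
    nlinarith [l1, h8]
  have h1m : (0:ℝ) < 1 + 1/(m:ℝ) := by positivity
  have final : Real.exp (x / Real.exp 1) ≤
      (1 + 1/(m:ℝ)) * (x / (m:ℝ)) ^ ((m:ℝ)) := by
    rw [Real.rpow_def_of_pos hxm]
    calc Real.exp (x / Real.exp 1)
        ≤ Real.exp (Real.log (1 + 1/(m:ℝ)) + (m:ℝ) * Real.log (x / (m:ℝ))) :=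
          Real.exp_le_exp.mpr key
      _ = (1 + 1/(m:ℝ)) * Real.exp (Real.log (x / (m:ℝ)) * (m:ℝ)) := by
          rw [Real.exp_add, Real.exp_log h1m, mul_comm ((m:ℝ))]
  have hid : (1 + 1/(m:ℝ)) * (x / (m:ℝ)) ^ ((m:ℝ)) =
      (x / (m:ℝ)) ^ ((m:ℝ)) + (1/(m:ℝ)) * (x / (m:ℝ)) ^ ((m:ℝ)) := by ring
  linarith [final, hid.le, hid.ge]
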